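/- Let G be a group with subgroups A, B and an isomorphism φ : A ≃* B, and form the HNN extension HNNExtension G A B φ with canonical injection of : G → HNNExtension G A B φ and stable letter t. Assume that every element z ∈ B that centralizes B satisfies of(z) * t = t * of(z). Let c ∈ B be an element of infinite order in G that centralizes B, and let τ be a group automorphism of HNNExtension G A B φ such that τ(of(g)) = of(g) for all g ∈ G and τ(t) = of(c) * t. Then for every integer n ≥ 1 the automorphism τⁿ is not an inner automorphism of HNNExtension G A B φ; in particular, τ represents an infinite-order element of the outer automorphism group of HNNExtension G A B φ. -/

import Mathlib

namespace HNNAux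

open HNNExtension HNNExtension.NormalWord

theorem list_concat_eq_cons {α : Type*} : ∀ (l : List α) (a : α),
    l ++ [a] = a :: l → ∀ x ∈ l, x = a := by
  intro l
  induction l with
  | nil => simp
  | cons b l ih =>
    intro a hab x hx
    rw [List.cons_append] at hab
    obtain ⟨rfl, h2⟩ := List.cons_eq_cons.mp hab
    rcases List.mem_cons.mp hx with rfl | hx
    · rfl
    · exact ih b (by rw [h2]) x hx

theorem list_dropLast_eq_tail {α : Type*} : ∀ (l : List α) (a : α),
    l.dropLast = l.tail → l.head? = some a → ∀ x ∈ l, x = a := by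
  intro l
  induction l with
  | nil => simp
  | cons b l ih =>
    intro a hdt hh x hx
    obtain rfl : b = a := by simpa using hh
    rcases List.eq_nil_or_concat l with rfl | ⟨l', e, hl⟩
    · simpa using hx
    · have hlne : l ≠ [] := by rw [hl]; simp
      rw [List.dropLast_cons_of_ne_nil hlne, List.tail_cons] at hdt
      -- hdt : b :: l.dropLast = l
      rcases List.mem_cons.mp hx with rfl | hx
      · rfl
      · refine ih b ?_ ?_ x hx
        · conv_rhs => rw [← hdt]
          rfl
        · rw [← hdt]
          rfl

theorem chain_const {G : Type*} [Group G] {A B : Subgroup G} (u : ℤˣ) :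
    ∀ (l : List (ℤˣ × G)), (∀ p ∈ l, p.1 = u) →
    l.IsChain (fun a b => a.2 ∈ toSubgroup A B a.1 → a.1 = b.1) := by
  intro l
  induction l with
  | nil => simp
  | cons p l ih =>
    intro hl
    rw [List.isChain_cons]
    refine ⟨fun y hy _ => ?_, ih fun q hq => hl q (List.mem_cons_of_mem _ hq)⟩
    rw [hl p (List.mem_cons_self),
      hl y (List.mem_cons_of_mem _ (List.mem_of_mem_head? hy))]


section
variable {G : Type*} [Group G] {A B : Subgroup G} (φ : A ≃* B)

/-- Product of the letter part of a word. -/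
def P (l : List (ℤˣ × G)) : HNNExtension G A B φ :=
  (l.map fun x => (t ^ (x.1 : ℤ) * of x.2 : HNNExtension G A B φ)).prod

@[simp] theorem P_nil : P φ ([] : List (ℤˣ × G)) = 1 := rfl

theorem P_cons (p : ℤˣ × G) (l : List (ℤˣ × G)) :
    P φ (p :: l) = (t ^ (p.1 : ℤ) * of p.2) * P φ l := by
  simp [P]

theorem P_append (l₁ l₂ : List (ℤˣ × G)) :
    P φ (l₁ ++ l₂) = P φ l₁ * P φ l₂ := by
  simp [P]

theorem P_singleton (p : ℤˣ × G) :
    P φ [p] = t ^ (p.1 : ℤ) * of p.2 := by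
  simp [P]

theorem prod_mk (h : G) (l : List (ℤˣ × G)) (ch) :
    (⟨h, l, ch⟩ : ReducedWord G A B).prod φ = of h * P φ l := rfl

theorem core (s : HNNExtension G A B φ) (ρ : G → G)
    (hρ : ∀ g : G, (of (ρ g) : HNNExtension G A B φ) = s⁻¹ * of g * s)
    (z' : G) (hz' : (of z' : HNNExtension G A B φ) * s = s * of z')
    (w : HNNExtension G A B φ) (g₀ : G) (m : ℕ)
    (hw : w = s ^ m * of g₀)
    (H1 : ∀ g : G, w * of g = of g * w)
    (hkey : w * s = of z' * s * w) : z' ^ m = 1 := by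
  have hinj : Function.Injective (of : G → HNNExtension G A B φ) := of_injective φ
  have hpush : ∀ x : G, (of x : HNNExtension G A B φ) * s = s * of (ρ x) := by
    intro x; rw [hρ]; group
  have hmul : ∀ a b : G, ρ (a * b) = ρ a * ρ b := by
    intro a b; apply hinj; rw [map_mul, hρ, hρ, hρ, map_mul]; group
  have hpushPow : ∀ (k : ℕ) (x : G),
      (of x : HNNExtension G A B φ) * s ^ k = s ^ k * of (ρ^[k] x) := by
    intro k
    induction k with
    | zero => intro x; simp
    | succ k ih =>
      intro x
      rw [pow_succ', ← mul_assoc, hpush, mul_assoc, ih, Function.iterate_succ_apply,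
        ← mul_assoc, ← pow_succ']
  have hfix : ρ z' = z' := by
    apply hinj
    rw [hρ, mul_assoc, hz', ← mul_assoc, inv_mul_cancel, one_mul]
  have hfixpow : ∀ k : ℕ, ρ (z' ^ k) = z' ^ k := by
    intro k
    induction k with
    | zero =>
      apply hinj
      rw [hρ]; simp
    | succ k ih => rw [pow_succ, hmul, ih, hfix]
  have hconj : ∀ g : G, ρ^[m] g = g₀ * g * g₀⁻¹ := by
    intro g
    have e := H1 g
    rw [hw, mul_assoc, ← map_mul, ← mul_assoc, hpushPow, mul_assoc, ← map_mul] at e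
    have e2 := hinj (mul_left_cancel e)
    rw [e2, mul_assoc, mul_inv_cancel, mul_one]
  have hfixIter : ∀ k : ℕ, ρ^[k] z' = z' := by
    intro k
    induction k with
    | zero => rfl
    | succ k ih => rw [Function.iterate_succ_apply', ih, hfix]
  have hkey2 : ρ g₀ = z' * g₀ := by
    have e : s ^ (m+1) * of (ρ g₀) = s ^ (m+1) * of (ρ^[m+1] z' * g₀) := by
      calc s ^ (m+1) * of (ρ g₀) = w * s := by
            rw [hw, mul_assoc, hpush, ← mul_assoc, ← pow_succ]
        _ = of z' * s ^ (m+1) * of g₀ := by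
            rw [hkey, hw, pow_succ']; group
        _ = s ^ (m+1) * of (ρ^[m+1] z' * g₀) := by
            rw [map_mul, ← mul_assoc, ← hpushPow]
    have e2 := hinj (mul_left_cancel e)
    rw [e2, hfixIter]
  have tele : ∀ k : ℕ, ρ^[k] g₀ = z' ^ k * g₀ := by
    intro k
    induction k with
    | zero => simp
    | succ k ih =>
      rw [Function.iterate_succ_apply', ih, hmul, hfixpow, hkey2, pow_succ,
        mul_assoc]
  have := hconj g₀
  rw [tele m, mul_assoc, mul_inv_cancel, mul_one] at this
  exact mul_right_cancel (a := z' ^ m) (b := g₀) (by rw [this, one_mul])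

theorem pushWord (s : HNNExtension G A B φ) (ρ : G → G)
    (hρ : ∀ g : G, (of (ρ g) : HNNExtension G A B φ) = s⁻¹ * of g * s) :
    ∀ (l : List (ℤˣ × G)) (x : G),
      (∀ p ∈ l, (t ^ (p.1 : ℤ) : HNNExtension G A B φ) = s) →
      ∃ g₀ : G, of x * P φ l = s ^ l.length * of g₀ := by
  have hpush : ∀ x : G, (of x : HNNExtension G A B φ) * s = s * of (ρ x) := by
    intro x; rw [hρ]; group
  intro l
  induction l with
  | nil => intro x _; exact ⟨x, by simp⟩
  | cons p l ih =>
    intro x hl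
    have hp : (t ^ (p.1 : ℤ) : HNNExtension G A B φ) = s := hl p (List.mem_cons_self)
    obtain ⟨g₀, hg₀⟩ := ih (ρ x * p.2) (fun q hq => hl q (List.mem_cons_of_mem _ hq))
    refine ⟨g₀, ?_⟩
    rw [P_cons, hp, ← mul_assoc, ← mul_assoc, hpush, mul_assoc s, ← map_mul,
      mul_assoc, hg₀, ← mul_assoc, ← pow_succ']
    rfl


theorem topStep (u : ℤˣ) (h : G) (L : List (ℤˣ × G)) (hL : ∀ p ∈ L, p.1 = u)
    (hne : L ≠ []) (w : HNNExtension G A B φ) (hw : w = of h * P φ L)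
    (H1 : ∀ g : G, w * of g = of g * w) :
    ∀ x : G, x ∈ toSubgroup A B (-u) := by
  have key : ∀ g : G, h⁻¹ * (g * h) ∈ toSubgroup A B (-u) := by
    intro g
    obtain ⟨L₁, q, hLq⟩ := (List.eq_nil_or_concat L).resolve_left hne
    rw [List.concat_eq_append] at hLq
    subst hLq
    have hq : q.1 = u := hL q (by simp)
    have hL₁ : ∀ p ∈ L₁ ++ [(u, q.2 * g)], p.1 = u := by
      intro p hp
      rcases List.mem_append.mp hp with hp | hp
      · exact hL p (List.mem_append_left _ hp)
      · simp at hp; rw [hp]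
    set W₁ : ReducedWord G A B := ⟨h, L₁ ++ [(u, q.2 * g)], chain_const u _ hL₁⟩
      with hW₁
    set W₂ : ReducedWord G A B := ⟨g * h, L₁ ++ [q], chain_const u _ hL⟩ with hW₂
    have hprod : W₁.prod φ = W₂.prod φ := by
      rw [hW₁, hW₂, prod_mk, prod_mk, P_append, P_append, P_singleton, P_singleton,
        map_mul, map_mul, hq]
      have e1 : of h * (P φ L₁ * (t ^ (u : ℤ) * (of q.2 * of g))) =
          (of h * (P φ L₁ * (t ^ (u : ℤ) * of q.2))) * of g := by group
      have e2 : of (g : G) * of h * (P φ L₁ * (t ^ (u : ℤ) * of q.2)) =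
          of g * (of h * (P φ L₁ * (t ^ (u : ℤ) * of q.2))) := by group
      rw [e1, e2, ← hq, ← P_singleton φ q, ← P_append, ← hw]
      exact H1 g
    have hmap := ReducedWord.map_fst_eq_and_of_prod_eq φ hprod
    have hne₁ : L₁ ++ [(u, q.2 * g)] ≠ [] := by simp
    have hu : (W₁.toList.head?).map Prod.fst = some u := by
      rw [hW₁]
      show ((L₁ ++ [(u, q.2 * g)]).head?).map Prod.fst = some u
      rw [List.head?_eq_head hne₁]
      simp only [Option.map_some]
      rw [hL₁ _ (List.head_mem hne₁)]
    have := hmap.2 u (by rw [hu]; rfl)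
    simpa using this
  intro x
  have hx := key (h * x * h⁻¹)
  have e : h⁻¹ * (h * x * h⁻¹ * h) = x := by group
  rwa [e] at hx


theorem scenario (u : ℤˣ) (h : G) (L : List (ℤˣ × G)) (hL : ∀ p ∈ L, p.1 = u)
    (hne : L ≠ []) (w : HNNExtension G A B φ) (hw : w = of h * P φ L)
    (z' : G)
    (hz' : (of z' : HNNExtension G A B φ) * t ^ (u : ℤ) = t ^ (u : ℤ) * of z')
    (H1 : ∀ g : G, w * of g = of g * w)
    (hkey : w * t ^ (u : ℤ) = of z' * t ^ (u : ℤ) * w) : z' ^ L.length = 1 := by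
  have htop := topStep φ u h L hL hne w hw H1
  have hLs : ∀ p ∈ L, (t ^ (p.1 : ℤ) : HNNExtension G A B φ) = t ^ (u : ℤ) := by
    intro p hp; rw [hL p hp]
  rcases Int.units_eq_one_or u with rfl | rfl
  · have htop' : ∀ x : G, x ∈ B := by
      intro x
      have := htop x
      rwa [toSubgroup_neg_one] at this
    have hρ : ∀ g : G, (of (((φ.symm ⟨g, htop' g⟩ : A) : G)) : HNNExtension G A B φ) =
        (t ^ ((1 : ℤˣ) : ℤ))⁻¹ * of g * t ^ ((1 : ℤˣ) : ℤ) := by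
      intro g
      have e := inv_t_mul_of (φ := φ) ⟨g, htop' g⟩
      have : (t⁻¹ * of g * t : HNNExtension G A B φ) =
          of ((φ.symm ⟨g, htop' g⟩ : A) : G) * t⁻¹ * t := by
        rw [← e]
      simp only [Units.val_one, zpow_one]
      rw [this]; group
    obtain ⟨g₀, hg₀⟩ := pushWord φ (t ^ ((1 : ℤˣ) : ℤ))
      (fun g => ((φ.symm ⟨g, htop' g⟩ : A) : G)) hρ L h hLs
    exact core φ (t ^ ((1 : ℤˣ) : ℤ)) _ hρ z' hz' w g₀ L.length (hw.trans hg₀) H1 hkey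
  · have htop' : ∀ x : G, x ∈ A := by
      intro x
      have := htop x
      rwa [neg_neg, toSubgroup_one] at this
    have hρ : ∀ g : G, (of (((φ ⟨g, htop' g⟩ : B) : G)) : HNNExtension G A B φ) =
        (t ^ ((-1 : ℤˣ) : ℤ))⁻¹ * of g * t ^ ((-1 : ℤˣ) : ℤ) := by
      intro g
      have e := t_mul_of (φ := φ) ⟨g, htop' g⟩
      have : (t * of g * t⁻¹ : HNNExtension G A B φ) =
          of ((φ ⟨g, htop' g⟩ : B) : G) * t * t⁻¹ := by
        rw [← e]
      have hcast : ((-1 : ℤˣ) : ℤ) = (-1 : ℤ) := rfl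
      rw [hcast, zpow_neg, zpow_one, inv_inv]
      rw [this]; group
    obtain ⟨g₀, hg₀⟩ := pushWord φ (t ^ ((-1 : ℤˣ) : ℤ))
      (fun g => ((φ ⟨g, htop' g⟩ : B) : G)) hρ L h hLs
    exact core φ (t ^ ((-1 : ℤˣ) : ℤ)) _ hρ z' hz' w g₀ L.length (hw.trans hg₀) H1 hkey


theorem buildX' (h : G) (L₁ : List (ℤˣ × G)) (p : ℤˣ × G)
    (chainL : (L₁ ++ [p]).IsChain fun a b => a.2 ∈ toSubgroup A B a.1 → a.1 = b.1)
    (hp1 : p.1 = -1) (hpB : p.2 ∈ B) :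
    ∃ X' : ReducedWord G A B, X'.prod φ = (of h * P φ (L₁ ++ [p])) * t ∧
      X'.toList.map Prod.fst = L₁.map Prod.fst := by
  have hred : (t ^ (p.1 : ℤ) * of p.2 : HNNExtension G A B φ) * t =
      of ((φ.symm ⟨p.2, hpB⟩ : A) : G) := by
    have e := inv_t_mul_of (φ := φ) ⟨p.2, hpB⟩
    have hcast : ((p.1 : ℤˣ) : ℤ) = (-1 : ℤ) := by rw [hp1]; rfl
    rw [hcast, zpow_neg, zpow_one]
    calc (t⁻¹ * of p.2 : HNNExtension G A B φ) * t
        = (of ((φ.symm ⟨p.2, hpB⟩ : A) : G) * t⁻¹) * t := by rw [e]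
      _ = of ((φ.symm ⟨p.2, hpB⟩ : A) : G) := by group
  have chainL₁ : L₁.IsChain fun a b => a.2 ∈ toSubgroup A B a.1 → a.1 = b.1 :=
    (List.isChain_append.mp chainL).1
  rcases List.eq_nil_or_concat L₁ with rfl | ⟨L₂, q, hLq⟩
  · refine ⟨⟨h * ((φ.symm ⟨p.2, hpB⟩ : A) : G), [], List.isChain_nil⟩, ?_, by simp⟩
    rw [prod_mk, P_nil, mul_one, List.nil_append, P_singleton, map_mul, mul_assoc, hred]
  · rw [List.concat_eq_append] at hLq
    subst hLq
    have chainX' : (L₂ ++ [(q.1, q.2 * ((φ.symm ⟨p.2, hpB⟩ : A) : G))]).IsChain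
        fun a b => a.2 ∈ toSubgroup A B a.1 → a.1 = b.1 := by
      rw [List.isChain_append]
      refine ⟨(List.isChain_append.mp chainL₁).1, List.isChain_singleton _, ?_⟩
      intro x hx y hy
      simp only [List.head?_cons, Option.mem_def, Option.some_inj] at hy
      subst hy
      intro hmem
      exact (List.isChain_append.mp chainL₁).2.2 x hx q (by simp) hmem
    refine ⟨⟨h, L₂ ++ [(q.1, q.2 * ((φ.symm ⟨p.2, hpB⟩ : A) : G))], chainX'⟩, ?_, by simp⟩
    rw [prod_mk, P_append, P_singleton, P_append, P_append, P_singleton, P_singleton,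
      map_mul]
    dsimp only
    rw [← hred]
    group

theorem buildY' (z h : G) (L : List (ℤˣ × G))
    (chainL : L.IsChain fun a b => a.2 ∈ toSubgroup A B a.1 → a.1 = b.1)
    (p : ℤˣ × G) (hp : L.head? = some p) (hp1 : p.1 = -1) (hA : z * h ∈ A) :
    ∃ Y' : ReducedWord G A B, Y'.prod φ = t * (of z * (of h * P φ L)) ∧
      Y'.toList.map Prod.fst = (L.map Prod.fst).tail := by
  have hcons : p :: L.tail = L := List.cons_head?_tail hp
  have chainT : L.tail.IsChain fun a b => a.2 ∈ toSubgroup A B a.1 → a.1 = b.1 := by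
    rw [← hcons] at chainL
    exact (List.isChain_cons.mp chainL).2
  refine ⟨⟨((φ ⟨z * h, hA⟩ : B) : G) * p.2, L.tail, chainT⟩, ?_, by
    dsimp only
    exact List.map_tail⟩
  rw [prod_mk]
  have hred : (t * of (z * h) : HNNExtension G A B φ) * t⁻¹ =
      of ((φ ⟨z * h, hA⟩ : B) : G) := by
    have e := t_mul_of (φ := φ) ⟨z * h, hA⟩
    calc (t * of (z * h) : HNNExtension G A B φ) * t⁻¹
        = (of ((φ ⟨z * h, hA⟩ : B) : G) * t) * t⁻¹ := by rw [e]
      _ = of ((φ ⟨z * h, hA⟩ : B) : G) := by group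
  have hcast : ((p.1 : ℤˣ) : ℤ) = (-1 : ℤ) := by rw [hp1]; rfl
  calc of (((φ ⟨z * h, hA⟩ : B) : G) * p.2) * P φ L.tail
      = ((t * of (z * h)) * t⁻¹) * (of p.2 * P φ L.tail) := by
        rw [hred, map_mul]; group
    _ = t * (of z * (of h * (P φ (p :: L.tail)))) := by
        rw [P_cons, hcast, zpow_neg, zpow_one, map_mul]; group
    _ = t * (of z * (of h * P φ L)) := by rw [hcons]


theorem dichotomy (z h : G) (L : List (ℤˣ × G))
    (chainL : L.IsChain fun a b => a.2 ∈ toSubgroup A B a.1 → a.1 = b.1)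
    (w : HNNExtension G A B φ) (hw : w = of h * P φ L)
    (hstar : w * t = t * (of z * w)) :
    (L = [] ∧ h ∈ B) ∨ (L ≠ [] ∧ ∀ p ∈ L, p.1 = 1) ∨
      (L ≠ [] ∧ ∀ p ∈ L, p.1 = -1) := by
  by_cases hPX : ∀ p ∈ L.getLast?, p.2 ∈ toSubgroup A B p.1 → p.1 = 1
  · -- the appended word is reduced
    have chainX : (L ++ [((1 : ℤˣ), (1 : G))]).IsChain
        fun a b => a.2 ∈ toSubgroup A B a.1 → a.1 = b.1 := by
      rw [List.isChain_append]
      refine ⟨chainL, List.isChain_singleton _, ?_⟩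
      intro x hx y hy
      simp only [List.head?_cons, Option.mem_def, Option.some_inj] at hy
      subst hy
      exact hPX x hx
    have hXprod : (⟨h, L ++ [((1 : ℤˣ), (1 : G))], chainX⟩ : ReducedWord G A B).prod φ
        = w * t := by
      rw [prod_mk, P_append, P_singleton]
      simp only [Units.val_one, zpow_one, map_one, mul_one]
      rw [hw, mul_assoc]
    by_cases hPY : ∀ p ∈ L.head?, z * h ∈ A → (1 : ℤˣ) = p.1
    · -- CASE 1
      have chainY : (((1 : ℤˣ), z * h) :: L).IsChain
          fun a b => a.2 ∈ toSubgroup A B a.1 → a.1 = b.1 :=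
        List.isChain_cons.mpr ⟨fun y hy hm => hPY y hy (by simpa using hm), chainL⟩
      have hYprod : (⟨1, ((1 : ℤˣ), z * h) :: L, chainY⟩ : ReducedWord G A B).prod φ
          = w * t := by
        rw [prod_mk, P_cons]
        simp only [Units.val_one, zpow_one, map_one, one_mul, map_mul]
        rw [hstar, hw]
        group
      have hmap := ReducedWord.map_fst_eq_and_of_prod_eq φ (hXprod.trans hYprod.symm)
      have hfst : L.map Prod.fst ++ [(1 : ℤˣ)] = (1 : ℤˣ) :: L.map Prod.fst := by
        simpa using hmap.1
      have hall : ∀ p ∈ L, p.1 = 1 := fun p hp =>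
        list_concat_eq_cons _ _ hfst p.1 (List.mem_map_of_mem hp)
      rcases eq_or_ne L [] with rfl | hne
      · left
        refine ⟨rfl, ?_⟩
        have h1 : ((⟨h, [] ++ [((1 : ℤˣ), (1 : G))], chainX⟩ :
            ReducedWord G A B).toList.head?).map Prod.fst = some 1 := by
          simp
        have h2 := hmap.2 1 (by rw [h1]; rfl)
        simpa using h2
      · exact Or.inr (Or.inl ⟨hne, hall⟩)
    · -- CASE 3: length contradiction
      push_neg at hPY
      obtain ⟨p, hp, hA, hp1⟩ := hPY
      have hp1' : p.1 = -1 :=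
        (Int.units_eq_one_or p.1).resolve_left (fun hh => hp1 hh.symm)
      obtain ⟨Y', hY'prod, hY'fst⟩ := buildY' φ z h L chainL p hp hp1' hA
      have hY'prod2 : Y'.prod φ = w * t := by
        rw [hY'prod, ← hw, ← hstar]
      have hmap := ReducedWord.map_fst_eq_and_of_prod_eq φ (hXprod.trans hY'prod2.symm)
      have hlen := congrArg List.length hmap.1
      rw [hY'fst] at hlen
      have hLne : L ≠ [] := by
        rintro rfl
        simp at hp
      have hL1 : 1 ≤ L.length := List.length_pos_iff.mpr hLne
      simp only [List.length_map, List.length_append, List.length_cons,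
        List.length_tail] at hlen
      omega
  · push_neg at hPX
    obtain ⟨p, hp, hpmem, hp1⟩ := hPX
    have hp1' : p.1 = -1 := (Int.units_eq_one_or p.1).resolve_left hp1
    have hpB : p.2 ∈ B := by
      rw [hp1', toSubgroup_neg_one] at hpmem
      exact hpmem
    have hLne : L ≠ [] := by
      rintro rfl
      simp at hp
    obtain ⟨L₁, q, hLq⟩ := (List.eq_nil_or_concat L).resolve_left hLne
    rw [List.concat_eq_append] at hLq
    have hq : q = p := by
      rw [hLq, List.getLast?_append, Option.mem_def] at hp
      · simpa using hp
    subst hq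
    obtain ⟨X', hX'prod, hX'fst⟩ := buildX' φ h L₁ q
      (by rw [← hLq]; exact chainL) hp1' hpB
    have hX'prod2 : X'.prod φ = w * t := by
      rw [hX'prod, ← hLq, ← hw]
    by_cases hPY : ∀ p' ∈ L.head?, z * h ∈ A → (1 : ℤˣ) = p'.1
    · -- CASE 2 : length contradiction
      have chainY : (((1 : ℤˣ), z * h) :: L).IsChain
          fun a b => a.2 ∈ toSubgroup A B a.1 → a.1 = b.1 :=
        List.isChain_cons.mpr ⟨fun y hy hm => hPY y hy (by simpa using hm), chainL⟩
      have hYprod : (⟨1, ((1 : ℤˣ), z * h) :: L, chainY⟩ : ReducedWord G A B).prod φ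
          = w * t := by
        rw [prod_mk, P_cons]
        simp only [Units.val_one, zpow_one, map_one, one_mul, map_mul]
        rw [hstar, hw]
        group
      have hmap := ReducedWord.map_fst_eq_and_of_prod_eq φ (hX'prod2.trans hYprod.symm)
      have hlen := congrArg List.length hmap.1
      rw [hX'fst] at hlen
      have hlen2 := congrArg List.length hLq
      simp only [List.length_map, List.length_cons, List.length_append] at hlen hlen2
      omega
    · -- CASE 4 : all exponents are -1
      push_neg at hPY
      obtain ⟨p₀, hp₀, hA, hp₀1⟩ := hPY
      have hp₀1' : p₀.1 = -1 :=
        (Int.units_eq_one_or p₀.1).resolve_left (fun hh => hp₀1 hh.symm)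
      obtain ⟨Y', hY'prod, hY'fst⟩ := buildY' φ z h L chainL p₀ hp₀ hp₀1' hA
      have hY'prod2 : Y'.prod φ = w * t := by
        rw [hY'prod, ← hw, ← hstar]
      have hmap := ReducedWord.map_fst_eq_and_of_prod_eq φ (hX'prod2.trans hY'prod2.symm)
      have hdt : (L.map Prod.fst).dropLast = (L.map Prod.fst).tail := by
        have e1 : (L.map Prod.fst).dropLast = List.map Prod.fst L₁ := by
          rw [hLq]; simp
        rw [e1, ← hX'fst, hmap.1, hY'fst]
      have hhd : (L.map Prod.fst).head? = some (-1 : ℤˣ) := by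
        rw [List.head?_map, hp₀, Option.map_some, hp₀1']
      have hall : ∀ x ∈ L.map Prod.fst, x = (-1 : ℤˣ) :=
        list_dropLast_eq_tail _ _ hdt hhd
      exact Or.inr (Or.inr ⟨hLne, fun p' hp' =>
        hall p'.1 (List.mem_map_of_mem hp')⟩)

end

end HNNAux

/-- Application of Lemma 6.5 in the proof of Theorem B of the paper: if `c ∈ B`
has infinite order and centralizes `B` (and elements of `B` centralizing `B`
commute with the stable letter), then no positive power of the twist `τ`
determined by `c` is an inner automorphism of the HNN extension; hence `τ`
has infinite order in the outer automorphism group. -/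
theorem hnn_twist_infinite_order_in_out {G : Type*} [Group G] {A B : Subgroup G}
    (φ : A ≃* B)
    (hcomm : ∀ z ∈ B, (∀ b ∈ B, z * b = b * z) →
      (HNNExtension.of z : HNNExtension G A B φ) * HNNExtension.t =
        HNNExtension.t * HNNExtension.of z)
    (c : G) (hcB : c ∈ B) (hc : ¬ IsOfFinOrder c) (hcc : ∀ b ∈ B, c * b = b * c)
    (τ : MulAut (HNNExtension G A B φ))
    (hτof : ∀ g : G, τ (HNNExtension.of g) = HNNExtension.of g)
    (hτt : τ (HNNExtension.t : HNNExtension G A B φ) =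
      HNNExtension.of c * HNNExtension.t) :
    ∀ n : ℕ, 1 ≤ n → ¬ ∃ w : HNNExtension G A B φ, ∀ x, (τ ^ n) x = w * x * w⁻¹ := by
  open HNNExtension HNNAux in
  rintro n hn ⟨w, hwc⟩
  have hinj : Function.Injective (of : G → HNNExtension G A B φ) := of_injective φ
  have hpow_of : ∀ (k : ℕ) (g : G), (τ ^ k) (of g) = of g := by
    intro k
    induction k with
    | zero => intro g; simp
    | succ k ih =>
      intro g
      rw [pow_succ, MulAut.mul_apply, hτof, ih]
  have hpow_t : ∀ k : ℕ, (τ ^ k) (t : HNNExtension G A B φ) = of (c ^ k) * t := by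
    intro k
    induction k with
    | zero => simp
    | succ k ih =>
      rw [pow_succ', MulAut.mul_apply, ih, map_mul, hτof, hτt, ← mul_assoc,
        ← map_mul, ← pow_succ]
  set z := c ^ n with hzdef
  have hzB : z ∈ B := pow_mem hcB n
  have hzcent : ∀ b ∈ B, z * b = b * z := by
    intro b hb
    have hcom : Commute c b := hcc b hb
    exact (hcom.pow_left n).eq
  have hcz : (of z : HNNExtension G A B φ) * t = t * of z := hcomm z hzB hzcent
  have H1 : ∀ g : G, w * of g = of g * w := by
    intro g
    have e := hwc (of g)
    rw [hpow_of n g, eq_mul_inv_iff_mul_eq] at e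
    exact e.symm
  have H2 : w * t = of z * t * w := by
    have e := hwc t
    rw [hpow_t n, eq_mul_inv_iff_mul_eq] at e
    exact e.symm
  have hz1 : z ≠ 1 := by
    intro hz1
    exact hc (isOfFinOrder_iff_pow_eq_one.mpr ⟨n, hn, hz1⟩)
  -- get a reduced word for w
  obtain ⟨d⟩ := NormalWord.TransversalPair.nonempty G A B
  have hr : NormalWord.ReducedWord.prod φ
      ((NormalWord.equiv φ d) w).toReducedWord = w :=
    (NormalWord.equiv φ d).symm_apply_apply w
  set r := ((NormalWord.equiv φ d) w).toReducedWord with hrdef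
  have hw : w = of r.head * P φ r.toList := by
    rw [← hr]
    rfl
  have hstar : w * t = t * (of z * w) := by
    rw [H2, mul_assoc, ← mul_assoc (of z), hcz]
    group
  have hzpow : ∀ m : ℕ, 1 ≤ m → z ^ m ≠ 1 := by
    intro m hm hzm
    rw [hzdef, ← pow_mul] at hzm
    exact hc (isOfFinOrder_iff_pow_eq_one.mpr ⟨n * m, by positivity, hzm⟩)
  rcases dichotomy φ z r.head r.toList r.chain w hw hstar with
    ⟨hL0, hB⟩ | ⟨hne, hall⟩ | ⟨hne, hall⟩
  · -- w = of h with h ∈ B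
    rw [hL0, P_nil, mul_one] at hw
    have hcent : ∀ g : G, r.head * g = g * r.head := by
      intro g
      apply hinj
      rw [map_mul, map_mul, ← hw]
      exact H1 g
    have hth := hcomm r.head hB (fun b _ => hcent b)
    have e2 := H2
    rw [hw, mul_assoc, ← hth] at e2
    have h3 : (1 : HNNExtension G A B φ) * (of r.head * t) =
        of z * (of r.head * t) := by
      rw [one_mul, ← e2]
    have h4 : (1 : HNNExtension G A B φ) = of z := mul_right_cancel h3
    exact hz1 (hinj (by rw [map_one, ← h4]))
  · -- all exponents 1
    have hu1 : ((1 : ℤˣ) : ℤ) = (1 : ℤ) := rfl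
    have h1 := scenario φ 1 r.head r.toList hall hne w hw z
      (by rw [hu1, zpow_one]; exact hcz)
      H1
      (by rw [hu1, zpow_one]; exact H2)
    exact hzpow r.toList.length (List.length_pos_iff.mpr hne) h1
  · -- all exponents -1
    have hu1 : ((-1 : ℤˣ) : ℤ) = (-1 : ℤ) := rfl
    have hczinv : (of z⁻¹ : HNNExtension G A B φ) * t⁻¹ = t⁻¹ * of z⁻¹ := by
      rw [map_inv]
      have := congrArg (fun x => x⁻¹) hcz
      simp only [mul_inv_rev] at this
      rw [← this]
    have hkeyinv : w * t⁻¹ = of z⁻¹ * t⁻¹ * w := by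
      apply mul_right_cancel (b := t)
      have e1 : (t⁻¹ : HNNExtension G A B φ) * of z * t = of z := by
        rw [mul_assoc, hcz, ← mul_assoc, inv_mul_cancel, one_mul]
      calc w * t⁻¹ * t = w := by group
        _ = of z⁻¹ * (t⁻¹ * of z * t) * w := by
            rw [e1, map_inv, inv_mul_cancel, one_mul]
        _ = of z⁻¹ * t⁻¹ * (of z * t * w) := by group
        _ = of z⁻¹ * t⁻¹ * (w * t) := by rw [← H2]
        _ = of z⁻¹ * t⁻¹ * w * t := by group
    have h1 := scenario φ (-1) r.head r.toList hall hne w hw z⁻¹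
      (by rw [hu1, zpow_neg, zpow_one]; exact hczinv)
      H1
      (by rw [hu1, zpow_neg, zpow_one]; exact hkeyinv)
    rw [inv_pow, inv_eq_one] at h1
    exact hzpow r.toList.length (List.length_pos_iff.mpr hne) h1
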